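/- Let G be a graph with treewidth at most k. Then for every rooted tree decomposition T of G whose root bag B_r has size |B_r| > 2(k+1), there exists a legal partition (C_1, C_2, C_3, S) of V(G) with |S| ≤ k+1 such that at least two of the sets C_1 ∩ B_r, C_2 ∩ B_r, C_3 ∩ B_r are nonempty. -/

import Mathlib

open SimpleGraph

set_option linter.unusedSectionVars false

/-- A rooted tree decomposition of a graph `G` with node type `ι`. -/
structure RootedTD (V : Type) (G : SimpleGraph V) (ι : Type) where
  T : SimpleGraph ι
  tree : T.IsTree
  bag : ι → Finset V
  root : ι
  parent : ι → ι
  parent_root : parent root = root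
  parent_adj : ∀ x, x ≠ root → T.Adj x (parent x)
  parent_reach : ∀ x, ∃ n, parent^[n] x = root
  vert_cover : ∀ v, ∃ x, v ∈ bag x
  edge_cover : ∀ ⦃u v⦄, G.Adj u v → ∃ x, u ∈ bag x ∧ v ∈ bag x
  conn : ∀ (v : V) (x y : ι) (w : T.Walk x y), w.IsPath →
      v ∈ bag x → v ∈ bag y → ∀ z ∈ w.support, v ∈ bag z

/-- The treewidth of G is at most k. -/
def treewidthLE (V : Type) (G : SimpleGraph V) (k : ℕ) : Prop :=
  ∃ (m : ℕ) (D : RootedTD V G (Fin m)), ∀ x, (D.bag x).card ≤ k + 1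

namespace Stmt17Aux

variable {n : Type} [DecidableEq n] {T : SimpleGraph n}

/-- The unique path between two vertices of a tree. -/
noncomputable def tp (ht : T.IsTree) (x y : n) : T.Walk x y :=
  (ht.existsUnique_path x y).choose

lemma tp_isPath (ht : T.IsTree) (x y : n) : (tp ht x y).IsPath :=
  (ht.existsUnique_path x y).choose_spec.1

lemma eq_tp (ht : T.IsTree) {x y : n} (p : T.Walk x y) (hp : p.IsPath) : p = tp ht x y :=
  (ht.existsUnique_path x y).choose_spec.2 p hp

lemma tp_subset (ht : T.IsTree) {x y : n} (w : T.Walk x y) :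
    (tp ht x y).support ⊆ w.support := by
  rw [← eq_tp ht w.bypass w.bypass_isPath]
  exact w.support_bypass_subset

lemma tp_trans (ht : T.IsTree) (x y z t : n) (h : t ∈ (tp ht x z).support) :
    t ∈ (tp ht x y).support ∨ t ∈ (tp ht y z).support := by
  have := tp_subset ht ((tp ht x y).append (tp ht y z)) h
  rwa [Walk.mem_support_append_iff] at this

lemma mem_tp_symm (ht : T.IsTree) {x y t : n} :
    t ∈ (tp ht x y).support ↔ t ∈ (tp ht y x).support := by
  rw [← eq_tp ht (tp ht y x).reverse (tp_isPath ht y x).reverse]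
  simp [Walk.support_reverse]

lemma tp_concat (ht : T.IsTree) {z a b : n} (hab : T.Adj a b)
    (hb : b ∉ (tp ht z a).support) : tp ht z b = (tp ht z a).concat hab := by
  refine (eq_tp ht _ ?_).symm
  have : ((tp ht z a).concat hab).reverse.IsPath := by
    rw [Walk.reverse_concat]
    exact ((tp_isPath ht z a).reverse.cons (by simpa [Walk.support_reverse] using hb))
  simpa only [Walk.reverse_reverse] using this.reverse

lemma edge_dichotomy (ht : T.IsTree) {a b : n} (hab : T.Adj a b) (z : n) :
    a ∈ (tp ht z b).support ∨ b ∈ (tp ht z a).support := by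
  by_cases hb : b ∈ (tp ht z a).support
  · exact Or.inr hb
  · left
    rw [tp_concat ht hab hb, Walk.support_concat]
    simp

lemma tp_drop (ht : T.IsTree) {z a c : n} (h : a ∈ (tp ht z c).support) :
    (tp ht a c).support ⊆ (tp ht z c).support := by
  rw [← eq_tp ht ((tp ht z c).dropUntil a h) ((tp_isPath ht z c).dropUntil h)]
  exact Walk.support_dropUntil_subset _ h

lemma tp_self (ht : T.IsTree) (b : n) : (tp ht b b).support = [b] := by
  rw [← eq_tp ht Walk.nil Walk.IsPath.nil]
  rfl

/-- Any walk in `G` between `u` and `v` must meet the bag of any tree node on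
the tree path between a bag containing `u` and a bag containing `v`. -/
lemma walk_meets_bag {V : Type} {G : SimpleGraph V} (E : RootedTD V G n)
    {u v : V} (P : G.Walk u v) :
    ∀ (x y : n), u ∈ E.bag x → v ∈ E.bag y →
      ∀ t ∈ (tp E.tree x y).support, ∃ w ∈ P.support, w ∈ E.bag t := by
  induction P with
  | nil =>
    intro x y hx hy t htt
    exact ⟨_, Walk.start_mem_support _,
      E.conn _ x y _ (tp_isPath _ x y) hx hy t htt⟩
  | @cons u u₁ v h P ih =>
    intro x y hx hy t htt
    obtain ⟨z, hz1, hz2⟩ := E.edge_cover h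
    rcases tp_trans E.tree x z y t htt with h1 | h2
    · exact ⟨u, Walk.start_mem_support _,
        E.conn _ x z _ (tp_isPath _ _ _) hx hz1 t h1⟩
    · obtain ⟨w, hw, hwt⟩ := ih z y hz2 hy t h2
      exact ⟨w, by simp [hw], hwt⟩

end Stmt17Aux

open Stmt17Aux in
theorem stmt17 {V ι : Type} [Fintype V] (G : SimpleGraph V) (k : ℕ)
    (htw : treewidthLE V G k) (D : RootedTD V G ι)
    (hr : 2 * (k + 1) < (D.bag D.root).card) :
    ∃ (C : Fin 3 → Set V) (S : Set V), S.ncard ≤ k + 1 ∧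
      (∀ i j, i ≠ j → Disjoint (C i) (C j)) ∧
      (∀ i, Disjoint (C i) S) ∧
      (S ∪ ⋃ i, C i) = Set.univ ∧
      (∀ i j, i ≠ j → ∀ u ∈ C i, ∀ v ∈ C j, ¬ G.Adj u v) ∧
      ∃ i j, i ≠ j ∧ (C i ∩ (D.bag D.root : Set V)).Nonempty ∧
        (C j ∩ (D.bag D.root : Set V)).Nonempty := by
  classical
  obtain ⟨m, E, hbag⟩ := htw
  set B := D.bag D.root with hBdef
  set ht := E.tree with htdef
  set xu : V → Fin m := fun u => (E.vert_cover u).choose with hxu_def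
  have hxu : ∀ u : V, u ∈ E.bag (xu u) := fun u => (E.vert_cover u).choose_spec
  -- Step 1: find a separator node t and u v ∈ B separated by it.
  have hC : ∃ (t : Fin m) (u v : V), u ∈ B ∧ v ∈ B ∧ u ∉ E.bag t ∧ v ∉ E.bag t ∧
      t ∈ (tp ht (xu u) (xu v)).support := by
    by_contra hcon
    push_neg at hcon
    -- every bag misses some vertex of B
    have hmiss : ∀ t : Fin m, ∃ u, u ∈ B ∧ u ∉ E.bag t := by
      intro t
      by_contra hh
      push_neg at hh
      have h1 : B ⊆ E.bag t := fun u hu => hh u hu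
      have h2 := Finset.card_le_card h1
      have h3 := hbag t
      omega
    set Q : Fin m → Fin m → Prop :=
      fun a b => E.T.Adj a b ∧ ∀ u ∈ B, u ∉ E.bag a → a ∉ (tp ht (xu u) b).support
      with hQdef
    have key : ∀ t : Fin m, ∃ b, Q t b := by
      intro t
      obtain ⟨u0, hu0B, hu0⟩ := hmiss t
      have hne : t ≠ xu u0 := fun h => hu0 (h ▸ hxu u0)
      have hP := tp_isPath ht t (xu u0)
      cases hp : tp ht t (xu u0) with
      | nil => exact absurd rfl hne
      | @cons _ b _ hadj q =>
        rw [hp, Walk.cons_isPath_iff] at hP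
        have hq : tp ht b (xu u0) = q := (eq_tp ht q hP.1).symm
        refine ⟨b, hadj, ?_⟩
        intro u huB hut hmem
        rcases tp_trans ht (xu u) (xu u0) b t hmem with h1 | h2
        · exact hcon t u u0 huB hu0B hut hu0 h1
        · rw [mem_tp_symm ht, hq] at h2
          exact hP.2 h2
    set S2 : Fin m → Fin m → Set (Fin m) :=
      fun a b => {z | a ∉ (tp ht z b).support} with hS2def
    have hbS2 : ∀ a b, E.T.Adj a b → b ∈ S2 a b := by
      intro a b hab
      simp only [hS2def, Set.mem_setOf_eq, tp_self ht b]
      simp [hab.ne]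
    have desc : ∀ (N : ℕ) (a b : Fin m), Q a b → (S2 a b).ncard ≤ N →
        ∃ a' b', Q a' b' ∧ Q b' a' := by
      intro N
      induction N with
      | zero =>
        intro a b hQ hcard
        have : 0 < (S2 a b).ncard :=
          (Set.ncard_pos (Set.toFinite _)).mpr ⟨b, hbS2 a b hQ.1⟩
        omega
      | succ N ih =>
        intro a b hQ hcard
        obtain ⟨c, hQbc⟩ := key b
        by_cases hca : c = a
        · exact ⟨a, b, hQ, hca ▸ hQbc⟩
        · have hsub : S2 b c ⊆ S2 a b := by
            intro z hz
            simp only [hS2def, Set.mem_setOf_eq] at hz ⊢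
            intro ha
            have hcb : E.T.Adj c b := hQbc.1.symm
            rw [tp_concat ht hcb hz, Walk.support_concat,
              List.mem_append] at ha
            have hac : a ∈ (tp ht z c).support := by
              rcases ha with h | h
              · exact h
              · simp only [List.mem_singleton] at h
                exact absurd h hQ.1.ne
            -- the path from a to c is a-b-c, so b would be on tp z c
            have habc : (Walk.cons hQ.1 (Walk.cons hQbc.1 Walk.nil) :
                E.T.Walk a c).IsPath := by
              rw [Walk.cons_isPath_iff, Walk.cons_isPath_iff]
              refine ⟨⟨Walk.IsPath.nil, ?_⟩, ?_⟩
              · simp only [Walk.support_nil, List.mem_singleton]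
                exact hQbc.1.ne
              · simp only [Walk.support_cons, Walk.support_nil, List.mem_cons,
                  List.mem_singleton, not_or]
                exact ⟨hQ.1.ne, fun h => hca h.symm, List.not_mem_nil⟩
            have hb_mem : b ∈ (tp ht a c).support := by
              rw [← eq_tp ht _ habc]
              simp
            exact hz (tp_drop ht hac hb_mem)
          have hss : S2 b c ⊂ S2 a b := by
            refine ⟨hsub, fun hback => ?_⟩
            have h1 : b ∈ S2 b c := hback (hbS2 a b hQ.1)
            simp only [hS2def, Set.mem_setOf_eq] at h1
            exact h1 (Walk.start_mem_support _)
          have := Set.ncard_lt_ncard hss (Set.toFinite _)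
          exact ih b c hQbc (by omega)
    -- start the descent anywhere
    have hBne : B.Nonempty := Finset.card_pos.mp (by omega)
    obtain ⟨u1, hu1⟩ := hBne
    obtain ⟨b0, hQ0⟩ := key (xu u1)
    obtain ⟨a, b, hQab, hQba⟩ := desc (S2 (xu u1) b0).ncard (xu u1) b0 hQ0 le_rfl
    have hsub : B ⊆ E.bag a ∪ E.bag b := by
      intro w hw
      by_contra hwn
      rw [Finset.mem_union] at hwn
      push_neg at hwn
      have h1 := hQab.2 w hw hwn.1
      have h2 := hQba.2 w hw hwn.2
      rcases edge_dichotomy ht hQab.1 (xu w) with h | h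
      · exact h1 h
      · exact h2 h
    have h3 := Finset.card_le_card hsub
    have h4 := Finset.card_union_le (E.bag a) (E.bag b)
    have h5 := hbag a
    have h6 := hbag b
    omega
  obtain ⟨t, u, v, huB, hvB, hut, hvt, hmem⟩ := hC
  -- Step 2: every G-walk from u to v meets the bag of t.
  have hwalkmeet : ∀ (P : G.Walk u v), ∃ w ∈ P.support, w ∈ E.bag t := by
    intro P
    refine walk_meets_bag E P (xu u) (xu v) (hxu u) (hxu v) t hmem
  -- Step 3: build the partition.
  set S : Set V := ↑(E.bag t) with hSdef
  set K : SimpleGraph V :=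
    { Adj := fun a b => G.Adj a b ∧ a ∉ S ∧ b ∉ S,
      symm := ⟨fun a b h => ⟨h.1.symm, h.2.2, h.2.1⟩⟩,
      loopless := ⟨fun a h => G.loopless.irrefl a h.1⟩ } with hKdef
  have hKadj : ∀ {a b : V}, G.Adj a b → a ∉ S → b ∉ S → K.Adj a b :=
    fun h ha hb => ⟨h, ha, hb⟩
  have conv : ∀ {a b : V} (W : K.Walk a b), a ∉ S →
      ∃ P : G.Walk a b, ∀ w ∈ P.support, w ∉ S := by
    intro a b W
    induction W with
    | nil => intro ha; exact ⟨Walk.nil, by simpa⟩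
    | @cons a a₁ b h W ih =>
      intro ha
      obtain ⟨P, hP⟩ := ih h.2.2
      refine ⟨Walk.cons h.1 P, ?_⟩
      intro w hw
      rw [Walk.support_cons, List.mem_cons] at hw
      rcases hw with rfl | hw
      · exact ha
      · exact hP w hw
  have huS : u ∉ S := by simpa [hSdef] using hut
  have hvS : v ∉ S := by simpa [hSdef] using hvt
  have hnr : ¬ K.Reachable v u := by
    rintro ⟨W⟩
    obtain ⟨P, hP⟩ := conv W hvS
    obtain ⟨w, hw, hwt⟩ := hwalkmeet P.reverse
    rw [Walk.support_reverse, List.mem_reverse] at hw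
    exact hP w hw (by simpa [hSdef] using hwt)
  set cls : V → Fin 3 := fun w =>
    if K.Reachable w u then 0 else if K.Reachable w v then 1 else 2 with hclsdef
  refine ⟨fun i => {w | w ∉ S ∧ cls w = i}, S, ?_, ?_, ?_, ?_, ?_, ?_⟩
  · rw [hSdef, Set.ncard_coe_finset]; exact hbag t
  · intro i j hij
    rw [Set.disjoint_left]
    rintro w ⟨_, hwi⟩ ⟨_, hwj⟩
    exact hij (hwi ▸ hwj ▸ rfl)
  · intro i
    rw [Set.disjoint_left]
    rintro w ⟨hwS, _⟩
    exact hwS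
  · ext w
    simp only [Set.mem_union, Set.mem_iUnion, Set.mem_setOf_eq, Set.mem_univ, iff_true]
    by_cases hwS : w ∈ S
    · exact Or.inl hwS
    · exact Or.inr ⟨cls w, hwS, rfl⟩
  · rintro i j hij a ⟨haS, hai⟩ b ⟨hbS, hbj⟩ hadj
    have hreach : K.Reachable a b := (hKadj hadj haS hbS).reachable
    have hclseq : cls a = cls b := by
      have h1 : K.Reachable a u ↔ K.Reachable b u :=
        ⟨fun h => hreach.symm.trans h, fun h => hreach.trans h⟩
      have h2 : K.Reachable a v ↔ K.Reachable b v :=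
        ⟨fun h => hreach.symm.trans h, fun h => hreach.trans h⟩
      simp only [hclsdef]
      by_cases hu' : K.Reachable b u
      · rw [if_pos (h1.mpr hu'), if_pos hu']
      · rw [if_neg (fun h => hu' (h1.mp h)), if_neg hu']
        by_cases hv' : K.Reachable b v
        · rw [if_pos (h2.mpr hv'), if_pos hv']
        · rw [if_neg (fun h => hv' (h2.mp h)), if_neg hv']
    exact hij (hai ▸ hbj ▸ hclseq)
  · refine ⟨0, 1, by decide, ⟨u, ⟨huS, ?_⟩, huB⟩, ⟨v, ⟨hvS, ?_⟩, hvB⟩⟩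
    · simp only [hclsdef]
      rw [if_pos (Reachable.refl u)]
    · simp only [hclsdef]
      rw [if_neg hnr, if_pos (Reachable.refl v)]
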